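/- arXiv:2506.01832 — 3 statements merged into one kernel-verified Lean document; each statement's English description precedes it below -/
import Mathlib

section
/- Let g : {0,1}^w → S be a non-constant function into any set S. If T_1,…,T_w are independent Bernoulli(p) random variables and U is uniform on {0,1}^w independent of T, then with probability at least p·((1−p)/2)^{w−1}, the restricted function x ↦ g(U ⊕ (T ∧ x)) is a non-constant function of a single bit. -/
open scoped Classical

lemma exists_adjacent_aux {w : ℕ} {S : Type*} (g : (Fin w → Bool) → S) :
    ∀ (s : Finset (Fin w)) (x y : Fin w → Bool), (∀ i ∉ s, x i = y i) → g x ≠ g y →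
      ∃ a j, g a ≠ g (Function.update a j (!(a j))) := by
  intro s
  induction s using Finset.induction_on with
  | empty =>
    intro x y hxy hne
    exact absurd (congrArg g (funext fun i => hxy i (by simp))) hne
  | @insert i s hi ih =>
    intro x y hxy hne
    set y' := Function.update y i (x i) with hy'
    have hxy' : ∀ k ∉ s, x k = y' k := by
      intro k hk
      by_cases hki : k = i
      · subst hki; simp [hy', Function.update]
      · simp only [hy', Function.update, hki, if_neg, dif_neg]
        exact hxy k (by simp [hki, hk])
    by_cases hgy : g y' = g y
    · exact ih x y' hxy' (by rw [hgy]; exact hne)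
    · have hxi : x i ≠ y i := by
        intro h
        apply hgy
        rw [hy', h, Function.update_eq_self]
      have hxi' : x i = !(y i) := by
        cases h1 : x i <;> cases h2 : y i <;>
          first | rfl | exact absurd (h1.trans h2.symm) hxi
      refine ⟨y, i, fun h => hgy ?_⟩
      rw [hy', hxi', h]

lemma exists_adjacent {w : ℕ} {S : Type*} (g : (Fin w → Bool) → S)
    (hg : ∃ x y, g x ≠ g y) : ∃ a j, g a ≠ g (Function.update a j (!(a j))) := by
  obtain ⟨x, y, hxy⟩ := hg
  exact exists_adjacent_aux g Finset.univ x y (fun i hi => absurd (Finset.mem_univ i) hi) hxy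

/-- If `g : {0,1}^w → S` is non-constant, `T₁,…,T_w` are independent Bernoulli(p)
bits and `U` is uniform on `{0,1}^w`, then with probability at least
`p·((1-p)/2)^{w-1}` the restriction `x ↦ g(U ⊕ (T ∧ x))` is a non-constant
function of a single bit. -/
theorem restriction_nonconstant_one_bit {w : ℕ} {S : Type*}
    (g : (Fin w → Bool) → S) (hg : ∃ x y, g x ≠ g y)
    (p : ℝ) (hp0 : 0 ≤ p) (hp1 : p ≤ 1) (hw : 1 ≤ w) :
    p * ((1 - p) / 2) ^ (w - 1) ≤
      ∑ u : Fin w → Bool, ∑ t : Fin w → Bool,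
        ((1 / 2 : ℝ) ^ w * ∏ i, (if t i then p else 1 - p)) *
        (if ((∃! i, t i = true) ∧
              ∃ x y : Fin w → Bool,
                g (fun i => xor (u i) (t i && x i)) ≠
                  g (fun i => xor (u i) (t i && y i)))
          then 1 else 0) := by
  obtain ⟨a, j, haj⟩ := exists_adjacent g hg
  set a' : Fin w → Bool := Function.update a j (!(a j)) with ha'
  -- the term function
  set f : (Fin w → Bool) → (Fin w → Bool) → ℝ := fun u t =>
    ((1 / 2 : ℝ) ^ w * ∏ i, (if t i then p else 1 - p)) *
        (if ((∃! i, t i = true) ∧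
              ∃ x y : Fin w → Bool,
                g (fun i => xor (u i) (t i && x i)) ≠
                  g (fun i => xor (u i) (t i && y i)))
          then 1 else 0) with hf
  have hnonneg : ∀ u t, 0 ≤ f u t := by
    intro u t
    apply mul_nonneg
    · apply mul_nonneg (by positivity)
      apply Finset.prod_nonneg
      intro i _
      split <;> linarith
    · split <;> norm_num
  set t₀ : Fin w → Bool := fun i => decide (i = j) with ht₀
  have ht₀unique : ∃! i, t₀ i = true := by
    refine ⟨j, by simp [ht₀], fun i hi => by simpa [ht₀] using hi⟩
  have hprod : (∏ i, (if t₀ i then p else 1 - p)) = p * (1 - p) ^ (w - 1) := by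
    rw [← Finset.mul_prod_erase Finset.univ _ (Finset.mem_univ j)]
    have h1 : (if t₀ j then p else 1 - p) = p := by simp [ht₀]
    have h2 : ∏ i ∈ Finset.univ.erase j, (if t₀ i then p else 1 - p)
        = (1 - p) ^ (w - 1) := by
      rw [Finset.prod_congr rfl (fun i hi => ?_), Finset.prod_const,
        Finset.card_erase_of_mem (Finset.mem_univ j), Finset.card_univ, Fintype.card_fin]
      have : i ≠ j := Finset.ne_of_mem_erase hi
      simp [ht₀, this]
    rw [h1, h2]
  have key : ∀ u : Fin w → Bool,
      (∃ x y : Fin w → Bool,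
        g (fun i => xor (u i) (t₀ i && x i)) ≠ g (fun i => xor (u i) (t₀ i && y i))) →
      f u t₀ = (1 / 2 : ℝ) ^ w * (p * (1 - p) ^ (w - 1)) := by
    intro u hu
    rw [hf]
    simp only [hprod]
    rw [if_pos ⟨ht₀unique, hu⟩, mul_one]
  -- the two witnesses
  have hfa : f a t₀ = (1 / 2 : ℝ) ^ w * (p * (1 - p) ^ (w - 1)) := by
    apply key
    refine ⟨fun _ => false, fun _ => true, ?_⟩
    have e1 : (fun i => xor (a i) (t₀ i && false)) = a := by
      funext i; simp
    have e2 : (fun i => xor (a i) (t₀ i && true)) = a' := by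
      funext i
      by_cases hij : i = j
      · subst hij; simp [ht₀, ha', Function.update]
      · simp [ht₀, hij, ha', Function.update, hij]
    rw [e1, e2]; exact haj
  have hfa' : f a' t₀ = (1 / 2 : ℝ) ^ w * (p * (1 - p) ^ (w - 1)) := by
    apply key
    refine ⟨fun _ => false, fun _ => true, ?_⟩
    have e1 : (fun i => xor (a' i) (t₀ i && false)) = a' := by
      funext i; simp
    have e2 : (fun i => xor (a' i) (t₀ i && true)) = a := by
      funext i
      by_cases hij : i = j
      · subst hij; simp [ht₀, ha', Function.update]
      · simp [ht₀, hij, ha', Function.update, hij]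
    rw [e1, e2]; exact fun h => haj h.symm
  have hane : a ≠ a' := by
    intro h
    have := congrFun h j
    simp [ha', Function.update] at this
  -- lower bound the sum
  have hsum : f a t₀ + f a' t₀ ≤ ∑ u : Fin w → Bool, ∑ t : Fin w → Bool, f u t := by
    have hinner : ∀ u, f u t₀ ≤ ∑ t : Fin w → Bool, f u t := fun u =>
      Finset.single_le_sum (fun t _ => hnonneg u t) (Finset.mem_univ t₀)
    calc f a t₀ + f a' t₀ ≤ (∑ t, f a t) + (∑ t, f a' t) :=
          add_le_add (hinner a) (hinner a')
      _ = ∑ u ∈ ({a, a'} : Finset (Fin w → Bool)), ∑ t, f u t := by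
          rw [Finset.sum_pair hane]
      _ ≤ ∑ u : Fin w → Bool, ∑ t : Fin w → Bool, f u t := by
          apply Finset.sum_le_sum_of_subset_of_nonneg (Finset.subset_univ _)
          intro u _ _
          exact Finset.sum_nonneg fun t _ => hnonneg u t
  refine le_trans ?_ hsum
  rw [hfa, hfa']
  obtain ⟨m, rfl⟩ : ∃ m, w = m + 1 := ⟨w - 1, (Nat.succ_pred_eq_of_pos hw).symm⟩
  simp only [Nat.add_sub_cancel]
  rw [div_pow]
  rw [pow_succ]
  ring_nf
  apply le_of_eq
  ring
end

section
/- Let D be an ε-biased distribution on {0,1}^n with ε ≤ 2^{−(|S|+1)}, let S ⊆ [n] and y ∈ {0,1}^S. Then Pr[D_S = y] ≥ 2^{−(|S|+1)}, and the conditional distribution of D restricted to coordinates [n]∖S given D_S = y is (2^{|S|+1}·ε)-biased. -/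
open scoped Classical

private lemma sgn_prod_expand {n : ℕ} (S : Finset (Fin n)) (x y : Fin n → Bool) :
    (if ∀ i ∈ S, x i = y i then (1:ℝ) else 0) * 2 ^ S.card
      = ∑ t ∈ S.powerset, ∏ i ∈ t,
          ((if y i then (-1:ℝ) else 1) * (if x i then (-1:ℝ) else 1)) := by
  have h := Finset.prod_add (fun i => (if y i then (-1:ℝ) else 1) * (if x i then (-1:ℝ) else 1))
      (fun _ => (1:ℝ)) S
  simp only [Finset.prod_const_one, mul_one] at h
  rw [← h]
  by_cases hxy : ∀ i ∈ S, x i = y i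
  · rw [if_pos hxy, one_mul]
    have h2 : ∀ i ∈ S, ((if y i then (-1:ℝ) else 1) * (if x i then (-1:ℝ) else 1) + 1) = 2 := by
      intro i hi
      have := hxy i hi
      cases hy : y i <;> cases hx : x i <;> simp_all <;> norm_num
    rw [Finset.prod_congr rfl h2, Finset.prod_const]
  · rw [if_neg hxy, zero_mul, eq_comm]
    push_neg at hxy
    obtain ⟨i, hi, hne⟩ := hxy
    apply Finset.prod_eq_zero hi
    cases hy : y i <;> cases hx : x i <;> simp_all

private lemma cond_expand {n : ℕ} (D : (Fin n → Bool) → ℝ) (S T : Finset (Fin n))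
    (y : Fin n → Bool) (hdisj : ∀ i ∈ T, i ∉ S) :
    ∑ x, (if ∀ i ∈ S, x i = y i then D x else 0) * ∏ i ∈ T, (if x i then (-1:ℝ) else 1)
      = ((2:ℝ) ^ S.card)⁻¹ * ∑ t ∈ S.powerset,
          (∏ i ∈ t, (if y i then (-1:ℝ) else 1)) *
            ∑ x, D x * ∏ i ∈ t ∪ T, (if x i then (-1:ℝ) else 1) := by
  have hdisj' : ∀ t ∈ S.powerset, Disjoint t T := by
    intro t ht
    rw [Finset.mem_powerset] at ht
    rw [Finset.disjoint_left]
    intro a ha hat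
    exact hdisj a hat (ht ha)
  have h2 : (0:ℝ) < 2 ^ S.card := by positivity
  have key : ∀ x : Fin n → Bool,
      (if ∀ i ∈ S, x i = y i then D x else 0) * ∏ i ∈ T, (if x i then (-1:ℝ) else 1)
      = ((2:ℝ)^S.card)⁻¹ * ∑ t ∈ S.powerset,
          (∏ i ∈ t, (if y i then (-1:ℝ) else 1)) *
            (D x * ∏ i ∈ t ∪ T, (if x i then (-1:ℝ) else 1)) := by
    intro x
    have h := sgn_prod_expand S x y
    have hEq : ∀ t ∈ S.powerset,
        (∏ i ∈ t, (if y i then (-1:ℝ) else 1)) *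
          (D x * ∏ i ∈ t ∪ T, (if x i then (-1:ℝ) else 1))
        = ((∏ i ∈ t, ((if y i then (-1:ℝ) else 1) * (if x i then (-1:ℝ) else 1))) * D x)
            * ∏ i ∈ T, (if x i then (-1:ℝ) else 1) := by
      intro t ht
      rw [Finset.prod_union (hdisj' t ht), Finset.prod_mul_distrib]
      ring
    rw [Finset.sum_congr rfl hEq, ← Finset.sum_mul, ← Finset.sum_mul]
    have hind : (if ∀ i ∈ S, x i = y i then D x else 0)
        = ((2:ℝ)^S.card)⁻¹ * ((∑ t ∈ S.powerset,
            ∏ i ∈ t, ((if y i then (-1:ℝ) else 1) * (if x i then (-1:ℝ) else 1))) * D x) := by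
      rw [← h]
      by_cases hP : ∀ i ∈ S, x i = y i
      · rw [if_pos hP, if_pos hP]
        field_simp
      · rw [if_neg hP, if_neg hP]
        ring
    rw [hind]; ring
  rw [Finset.sum_congr rfl (fun x _ => key x), ← Finset.mul_sum, Finset.sum_comm]
  congr 1
  exact Finset.sum_congr rfl fun t _ => (Finset.mul_sum _ _ _).symm

/-- Conditioning an `ε`-biased distribution on the values of a set `S` of
coordinates: the event has probability at least `2^{-(|S|+1)}`, and the
conditional distribution on the remaining coordinates is `2^{|S|+1}·ε`-biased. -/
theorem biased_conditioning {n : ℕ} (D : (Fin n → Bool) → ℝ) (ε : ℝ)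
    (hD0 : ∀ x, 0 ≤ D x) (hD1 : ∑ x, D x = 1)
    (hbias : ∀ T : Finset (Fin n), T.Nonempty →
      |∑ x, D x * ∏ i ∈ T, (if x i then (-1 : ℝ) else 1)| ≤ ε)
    (S : Finset (Fin n)) (y : Fin n → Bool)
    (hε : ε ≤ ((2 : ℝ) ^ (S.card + 1))⁻¹) :
    ((2 : ℝ) ^ (S.card + 1))⁻¹ ≤ (∑ x, if ∀ i ∈ S, x i = y i then D x else 0) ∧
    ∀ T : Finset (Fin n), T.Nonempty → (∀ i ∈ T, i ∉ S) →
      |(∑ x, (if ∀ i ∈ S, x i = y i then D x else 0) *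
          ∏ i ∈ T, (if x i then (-1 : ℝ) else 1)) /
        (∑ x, if ∀ i ∈ S, x i = y i then D x else 0)| ≤ 2 ^ (S.card + 1) * ε := by
  set c := S.card with hc
  have h2c : (0:ℝ) < 2 ^ c := by positivity
  have h2c1 : (0:ℝ) < 2 ^ (c+1) := by positivity
  have habs1 : ∀ t : Finset (Fin n), |∏ i ∈ t, (if y i then (-1:ℝ) else 1)| = 1 := by
    intro t
    rw [Finset.abs_prod]
    apply Finset.prod_eq_one
    intro i _
    cases y i <;> simp
  -- Part 1
  have hP : ((2 : ℝ) ^ (c + 1))⁻¹ ≤ ∑ x, if ∀ i ∈ S, x i = y i then D x else 0 := by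
    have hexp := cond_expand D S ∅ y (by simp)
    simp only [Finset.union_empty, Finset.prod_empty, mul_one] at hexp
    rw [hexp]
    have hmem : ∅ ∈ S.powerset := Finset.empty_mem_powerset S
    rw [← Finset.add_sum_erase _ _ hmem]
    have hrest : -(((2:ℝ)^c - 1) * ε) ≤ ∑ t ∈ (S.powerset).erase ∅,
        (∏ i ∈ t, (if y i then (-1:ℝ) else 1)) * ∑ x, D x * ∏ i ∈ t, (if x i then (-1:ℝ) else 1) := by
      have hcard : ((S.powerset).erase ∅).card = 2^c - 1 := by
        rw [Finset.card_erase_of_mem hmem, Finset.card_powerset]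
      have hterm : ∀ t ∈ (S.powerset).erase ∅, -ε ≤
          (∏ i ∈ t, (if y i then (-1:ℝ) else 1)) *
            ∑ x, D x * ∏ i ∈ t, (if x i then (-1:ℝ) else 1) := by
        intro t ht
        have htne : t.Nonempty := Finset.nonempty_of_ne_empty (Finset.ne_of_mem_erase ht)
        have hb := hbias t htne
        have habs : |(∏ i ∈ t, (if y i then (-1:ℝ) else 1)) *
            ∑ x, D x * ∏ i ∈ t, (if x i then (-1:ℝ) else 1)| ≤ ε := by
          rw [abs_mul, habs1, one_mul]; exact hb
        linarith [neg_abs_le ((∏ i ∈ t, (if y i then (-1:ℝ) else 1)) *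
            ∑ x, D x * ∏ i ∈ t, (if x i then (-1:ℝ) else 1))]
      have hsum := Finset.card_nsmul_le_sum ((S.powerset).erase ∅)
        (fun t => (∏ i ∈ t, (if y i then (-1:ℝ) else 1)) *
          ∑ x, D x * ∏ i ∈ t, (if x i then (-1:ℝ) else 1)) (-ε) hterm
      rw [hcard, nsmul_eq_mul] at hsum
      have hcast : ((2^c - 1 : ℕ) : ℝ) = 2^c - 1 := by
        rw [Nat.cast_sub Nat.one_le_two_pow]
        push_cast; ring
      rw [hcast] at hsum
      linarith
    have hfirst : (∏ i ∈ (∅ : Finset (Fin n)), (if y i then (-1:ℝ) else 1)) *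
        ∑ x, D x * ∏ i ∈ (∅ : Finset (Fin n)), (if x i then (-1:ℝ) else 1) = 1 := by
      simp [hD1]
    rw [hfirst]
    set R := ∑ t ∈ (S.powerset).erase ∅,
        (∏ i ∈ t, (if y i then (-1:ℝ) else 1)) *
          ∑ x, D x * ∏ i ∈ t, (if x i then (-1:ℝ) else 1) with hR
    have hA1 : (1:ℝ) ≤ 2^c := one_le_pow₀ (by norm_num)
    have hBpos : (0:ℝ) < ((2:ℝ)^(c+1))⁻¹ := by positivity
    have hhalf : ((2:ℝ)^c - 1) * ε ≤ 1/2 := by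
      have h1 : ((2:ℝ)^c - 1) * ε ≤ ((2:ℝ)^c - 1) * ((2:ℝ)^(c+1))⁻¹ :=
        mul_le_mul_of_nonneg_left hε (by linarith)
      have h3 : (2:ℝ)^c * ((2:ℝ)^(c+1))⁻¹ = 1/2 := by
        rw [pow_succ]
        field_simp
      have h2 : ((2:ℝ)^c - 1) * ((2:ℝ)^(c+1))⁻¹ ≤ (2:ℝ)^c * ((2:ℝ)^(c+1))⁻¹ :=
        mul_le_mul_of_nonneg_right (by linarith) hBpos.le
      linarith
    have hstep : (1:ℝ)/2 ≤ 1 + R := by linarith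
    have hfin : ((2:ℝ)^(c+1))⁻¹ = ((2:ℝ)^c)⁻¹ * (1/2) := by
      rw [pow_succ]
      field_simp
    rw [hfin, hc]
    exact mul_le_mul_of_nonneg_left hstep (by positivity)
  refine ⟨hP, ?_⟩
  intro T hTne hTS
  have hεnn : 0 ≤ ε := le_trans (abs_nonneg _) (hbias T hTne)
  have hexp := cond_expand D S T y hTS
  have hN : |∑ x, (if ∀ i ∈ S, x i = y i then D x else 0) *
      ∏ i ∈ T, (if x i then (-1:ℝ) else 1)| ≤ ε := by
    rw [hexp, abs_mul, abs_inv, abs_of_pos h2c]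
    have hsum : |∑ t ∈ S.powerset, (∏ i ∈ t, (if y i then (-1:ℝ) else 1)) *
        ∑ x, D x * ∏ i ∈ t ∪ T, (if x i then (-1:ℝ) else 1)| ≤ 2^c * ε := by
      calc _ ≤ ∑ t ∈ S.powerset, |(∏ i ∈ t, (if y i then (-1:ℝ) else 1)) *
            ∑ x, D x * ∏ i ∈ t ∪ T, (if x i then (-1:ℝ) else 1)| :=
          Finset.abs_sum_le_sum_abs _ _
        _ ≤ ∑ t ∈ S.powerset, ε := by
          apply Finset.sum_le_sum
          intro t _
          rw [abs_mul, habs1, one_mul]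
          exact hbias (t ∪ T) (Finset.Nonempty.mono Finset.subset_union_right hTne)
        _ = 2^c * ε := by
          rw [Finset.sum_const, Finset.card_powerset, nsmul_eq_mul]
          push_cast; ring
    calc ((2:ℝ)^c)⁻¹ * |∑ t ∈ S.powerset, (∏ i ∈ t, (if y i then (-1:ℝ) else 1)) *
          ∑ x, D x * ∏ i ∈ t ∪ T, (if x i then (-1:ℝ) else 1)|
        ≤ ((2:ℝ)^c)⁻¹ * (2^c * ε) := mul_le_mul_of_nonneg_left hsum (by positivity)
      _ = ε := by field_simp
  set P := ∑ x, if ∀ i ∈ S, x i = y i then D x else 0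
  have hPpos : 0 < P := lt_of_lt_of_le (by positivity) hP
  rw [abs_div, abs_of_pos hPpos, div_le_iff₀ hPpos]
  have hgeb : (2:ℝ)^(c+1) * ε * ((2:ℝ)^(c+1))⁻¹ ≤ 2^(c+1) * ε * P :=
    mul_le_mul_of_nonneg_left hP (by positivity)
  have heq : (2:ℝ)^(c+1) * ε * ((2:ℝ)^(c+1))⁻¹ = ε := by field_simp
  linarith [hN]
end

section
/- Let G be a finite group such that for every unitary representation ρ of G and every g ∈ G, the subspace ker(ρ(g) − I) is a subrepresentation. Then every cyclic subgroup ⟨g⟩ of G is normal; hence G is a Dedekind group. -/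
open Matrix

/-- If for every unitary representation `ρ` of a finite group `G` and every
`g ∈ G` the fixed subspace `ker(ρ(g) − I)` is a subrepresentation, then every
cyclic subgroup of `G` is normal; hence `G` is a Dedekind group. -/
theorem mixing_implies_dedekind {G : Type*} [Group G] [Finite G]
    (hyp : ∀ (d : ℕ) (ρ : G →* Matrix.unitaryGroup (Fin d) ℂ) (g h : G) (v : Fin d → ℂ),
      ((ρ g : Matrix.unitaryGroup (Fin d) ℂ) : Matrix (Fin d) (Fin d) ℂ).mulVec v = v →
      ((ρ g : Matrix.unitaryGroup (Fin d) ℂ) : Matrix (Fin d) (Fin d) ℂ).mulVec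
          (((ρ h : Matrix.unitaryGroup (Fin d) ℂ) : Matrix (Fin d) (Fin d) ℂ).mulVec v) =
        ((ρ h : Matrix.unitaryGroup (Fin d) ℂ) : Matrix (Fin d) (Fin d) ℂ).mulVec v) :
    ∀ g : G, (Subgroup.zpowers g).Normal := by
  classical
  intro g
  cases nonempty_fintype G
  -- Build the regular representation as permutation matrices.
  set d := Fintype.card G with hd
  let e : G ≃ Fin d := Fintype.equivFin G
  let M : G → Matrix (Fin d) (Fin d) ℂ := fun a =>
    Matrix.of fun i j => if e.symm i = a * e.symm j then 1 else 0
  have hmul : ∀ a b : G, M a * M b = M (a * b) := by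
    intro a b
    ext i k
    simp only [M, Matrix.mul_apply, Matrix.of_apply]
    rw [Finset.sum_eq_single (e (b * e.symm k))]
    · simp [mul_assoc]
    · intro j _ hj
      rw [if_neg (show ¬ e.symm j = b * e.symm k from
        fun hc => hj (by rw [← hc, Equiv.apply_symm_apply])), mul_zero]
    · simp
  have hone : M 1 = 1 := by
    ext i j
    simp only [M, Matrix.of_apply, one_mul, Matrix.one_apply,
      e.symm.injective.eq_iff]
  have hstar : ∀ a : G, star (M a) = M a⁻¹ := by
    intro a
    ext i j
    simp only [M, Matrix.star_apply, Matrix.conjTranspose_apply, Matrix.of_apply]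
    rw [apply_ite (star : ℂ → ℂ), star_one, star_zero]
    congr 1
    rw [eq_iff_iff, eq_comm, eq_inv_mul_iff_mul_eq, eq_comm]
  have hmem : ∀ a : G, M a ∈ Matrix.unitaryGroup (Fin d) ℂ := by
    intro a
    rw [Matrix.mem_unitaryGroup_iff, hstar, hmul]
    simp [hone]
  let ρ : G →* Matrix.unitaryGroup (Fin d) ℂ :=
    { toFun := fun a => ⟨M a, hmem a⟩
      map_one' := Subtype.ext hone
      map_mul' := fun a b => Subtype.ext (hmul a b).symm }
  have hρ : ∀ a : G, ((ρ a : Matrix.unitaryGroup (Fin d) ℂ) : Matrix (Fin d) (Fin d) ℂ) = M a :=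
    fun a => rfl
  have hmv : ∀ (a : G) (v : Fin d → ℂ) (i : Fin d),
      (M a).mulVec v i = v (e (a⁻¹ * e.symm i)) := by
    intro a v i
    simp only [M, Matrix.mulVec, dotProduct, Matrix.of_apply]
    rw [Finset.sum_eq_single (e (a⁻¹ * e.symm i))]
    · rw [if_pos, one_mul]
      simp
    · intro j _ hj
      rw [if_neg (show ¬ e.symm i = a * e.symm j from fun hc => hj (by
        rw [← Equiv.apply_symm_apply e j, ← inv_mul_cancel_left a (e.symm j), ← hc])), zero_mul]
    · simp
  -- The indicator vector of the cyclic subgroup.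
  let v : Fin d → ℂ := fun j => if e.symm j ∈ Subgroup.zpowers g then 1 else 0
  have hfix : (M g).mulVec v = v := by
    funext i
    rw [hmv]
    simp only [v, Equiv.symm_apply_apply]
    congr 1
    rw [eq_iff_iff,
      Subgroup.mul_mem_cancel_left _ (Subgroup.inv_mem _ (Subgroup.mem_zpowers g))]
  have key : ∀ h : G, h⁻¹ * g * h ∈ Subgroup.zpowers g := by
    intro h
    have hk := hyp d ρ g h v (by rw [hρ]; exact hfix)
    rw [hρ, hρ] at hk
    have hk' := congrFun hk (e h)
    rw [hmv, hmv, hmv] at hk'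
    simp only [v, Equiv.symm_apply_apply] at hk'
    rw [inv_mul_cancel h] at hk'
    rw [if_pos (Subgroup.one_mem _)] at hk'
    by_cases hc : h⁻¹ * (g⁻¹ * h) ∈ Subgroup.zpowers g
    · have heq : h⁻¹ * g * h = (h⁻¹ * (g⁻¹ * h))⁻¹ := by group
      rw [heq]
      exact Subgroup.inv_mem _ hc
    · rw [if_neg hc] at hk'
      exact absurd hk' (by norm_num)
  constructor
  intro n hn h
  obtain ⟨k, rfl⟩ := hn
  have hconj : h * g ^ k * h⁻¹ = (h * g * h⁻¹) ^ k := by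
    simpa using (map_zpow (MulAut.conj h) g k)
  rw [hconj]
  have := key h⁻¹
  rw [inv_inv] at this
  exact Subgroup.zpow_mem _ this k
end
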